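/- For n ≥ 1, the signed count over all overpartitions π of n that contain at least one overlined part, weighted by (-1)^{ℓ_{N<O}(π)}, equals p(n), the number of ordinary partitions of n. Here ℓ_{N<O}(π) is the number of non-overlined parts of π of size strictly less than the size of the largest overlined part of π. -/

import Mathlib

open scoped Classical

/-- An overpartition of `n`: a finite set of overlined part sizes (the first
occurrence of a size may be overlined, so overlined parts are distinct)
together with a multiset of non-overlined parts, all parts positive,
with total sum `n`. -/
structure Overpartition (n : ℕ) where
  overs : Finset ℕ
  plain : Multiset ℕ
  over_pos : ∀ x ∈ overs, 0 < x
  plain_pos : ∀ x ∈ plain, 0 < x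
  sum_eq : (∑ x ∈ overs, x) + plain.sum = n
namespace OPaux
variable {n : ℕ}

theorem op_ext {π σ : Overpartition n} (h1 : π.overs = σ.overs) (h2 : π.plain = σ.plain) :
    π = σ := by cases π; cases σ; simp_all

theorem sup_id_mem {s : Finset ℕ} (hs : s.Nonempty) : s.sup id ∈ s := by
  have h : s.sup id = s.max' hs := le_antisymm
    (Finset.sup_le fun b hb => s.le_max' b hb)
    (Finset.le_sup (f := id) (s.max'_mem hs))
  rw [h]; exact s.max'_mem hs

def Lv (π : Overpartition n) : ℕ := π.overs.sup id

noncomputable def cand (π : Overpartition n) : Finset ℕ :=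
  (π.overs.erase (Lv π)) ∪ (π.plain.filter (fun x => x < Lv π)).toFinset

noncomputable def ml (π : Overpartition n) : ℕ :=
  Multiset.card (π.plain.filter (fun x => x < Lv π))

theorem Lv_mem {π : Overpartition n} (h : π.overs.Nonempty) : Lv π ∈ π.overs := sup_id_mem h

theorem lt_Lv_iff {π : Overpartition n} (h : π.overs.Nonempty) (x : ℕ) :
    (∃ y ∈ π.overs, x < y) ↔ x < Lv π := by
  constructor
  · rintro ⟨y, hy, hxy⟩; exact lt_of_lt_of_le hxy (Finset.le_sup (f := id) hy)
  · intro hx; exact ⟨Lv π, Lv_mem h, hx⟩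

theorem card_filter_eq {π : Overpartition n} (h : π.overs.Nonempty) :
    Multiset.card (π.plain.filter (fun x => ∃ y ∈ π.overs, x < y)) = ml π := by
  unfold ml
  congr 1
  exact Multiset.filter_congr (fun x _ => lt_Lv_iff h x)

theorem mem_cand {π : Overpartition n} {x : ℕ} (hx : x ∈ cand π) :
    x ∈ π.overs.erase (Lv π) ∨ (x ∈ π.plain ∧ x < Lv π) := by
  rcases Finset.mem_union.mp hx with h | h
  · exact Or.inl h
  · right; have := Multiset.mem_toFinset.mp h
    exact (Multiset.mem_filter.mp this).imp id id

theorem cand_lt {π : Overpartition n} {x : ℕ} (hx : x ∈ cand π) : x < Lv π := by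
  rcases mem_cand hx with h | h
  · have h1 := Finset.mem_of_mem_erase h
    have h2 := Finset.ne_of_mem_erase h
    exact lt_of_le_of_ne (Finset.le_sup (f := id) h1) h2
  · exact h.2

theorem cand_pos {π : Overpartition n} {x : ℕ} (hx : x ∈ cand π) : 0 < x := by
  rcases mem_cand hx with h | h
  · exact π.over_pos x (Finset.mem_of_mem_erase h)
  · exact π.plain_pos x h.1

theorem cand_plain {π : Overpartition n} {x : ℕ} (hx : x ∈ cand π) (hx' : x ∉ π.overs) :
    x ∈ π.plain ∧ x < Lv π := by
  rcases mem_cand hx with h | h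
  · exact absurd (Finset.mem_of_mem_erase h) hx'
  · exact h

end OPaux
namespace OPaux
variable {n : ℕ}

noncomputable def f (π : Overpartition n) : Overpartition n :=
  if h : (cand π).Nonempty then
    if hm : (cand π).sup id ∈ π.overs then
      { overs := π.overs.erase ((cand π).sup id)
        plain := (cand π).sup id ::ₘ π.plain
        over_pos := fun x hx => π.over_pos x (Finset.mem_of_mem_erase hx)
        plain_pos := by
          intro x hx
          rcases Multiset.mem_cons.mp hx with rfl | hx
          · exact cand_pos (sup_id_mem h)
          · exact π.plain_pos x hx
        sum_eq := by
          have H := Finset.sum_erase_add π.overs id hm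
          have := π.sum_eq
          simp only [Multiset.sum_cons, id] at *
          omega }
    else
      { overs := insert ((cand π).sup id) π.overs
        plain := π.plain.erase ((cand π).sup id)
        over_pos := by
          intro x hx
          rcases Finset.mem_insert.mp hx with rfl | hx
          · exact cand_pos (sup_id_mem h)
          · exact π.over_pos x hx
        plain_pos := fun x hx => π.plain_pos x (Multiset.mem_of_mem_erase hx)
        sum_eq := by
          have hmp : (cand π).sup id ∈ π.plain := (cand_plain (sup_id_mem h) hm).1
          have H1 := Finset.sum_insert (f := id) hm
          have H2 : ((cand π).sup id ::ₘ π.plain.erase ((cand π).sup id)).sum = π.plain.sum :=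
            congrArg Multiset.sum (Multiset.cons_erase hmp)
          have := π.sum_eq
          simp only [Multiset.sum_cons, id] at *
          omega }
  else π

section fprops
variable {π : Overpartition n}

theorem f_over_case1 (hc : (cand π).Nonempty) (hm : (cand π).sup id ∈ π.overs) :
    (f π).overs = π.overs.erase ((cand π).sup id) ∧ (f π).plain = (cand π).sup id ::ₘ π.plain := by
  rw [f, dif_pos hc, dif_pos hm]; exact ⟨rfl, rfl⟩

theorem f_over_case2 (hc : (cand π).Nonempty) (hm : (cand π).sup id ∉ π.overs) :
    (f π).overs = insert ((cand π).sup id) π.overs ∧ (f π).plain = π.plain.erase ((cand π).sup id) := by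
  rw [f, dif_pos hc, dif_neg hm]; exact ⟨rfl, rfl⟩

variable (hne : π.overs.Nonempty) (hc : (cand π).Nonempty)
include hne hc

theorem f_over_nonempty : (f π).overs.Nonempty := by
  by_cases hm : (cand π).sup id ∈ π.overs
  · rw [(f_over_case1 hc hm).1]
    exact ⟨Lv π, Finset.mem_erase.mpr ⟨(cand_lt (sup_id_mem hc)).ne', Lv_mem hne⟩⟩
  · rw [(f_over_case2 hc hm).1]
    exact Finset.insert_nonempty _ _

theorem f_Lv : Lv (f π) = Lv π := by
  by_cases hm : (cand π).sup id ∈ π.overs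
  · rw [Lv, (f_over_case1 hc hm).1]
    apply le_antisymm
    · exact Finset.sup_le fun b hb => Finset.le_sup (f := id) (Finset.mem_of_mem_erase hb)
    · exact Finset.le_sup (f := id)
        (Finset.mem_erase.mpr ⟨(cand_lt (sup_id_mem hc)).ne', Lv_mem hne⟩)
  · rw [Lv, (f_over_case2 hc hm).1, Finset.sup_insert]
    have := cand_lt (sup_id_mem hc)
    exact sup_eq_right.mpr (le_of_lt this) |>.trans rfl

end fprops
end OPaux
namespace OPaux
variable {n : ℕ}

theorem f_cand {π : Overpartition n} (hne : π.overs.Nonempty) (hc : (cand π).Nonempty) :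
    cand (f π) = cand π := by
  have hL := f_Lv hne hc
  set m := (cand π).sup id with hmdef
  have hmlt : m < Lv π := cand_lt (sup_id_mem hc)
  by_cases hm : m ∈ π.overs
  · obtain ⟨ho, hp⟩ := f_over_case1 hc hm
    ext x
    simp only [cand, hL, ho, hp, Finset.mem_union, Multiset.mem_toFinset,
      Multiset.mem_filter, Finset.mem_erase, Multiset.mem_cons]
    constructor
    · rintro (⟨hx1, hx2, hx3⟩ | ⟨(rfl | hx), hlt⟩)
      · exact Or.inl ⟨hx1, hx3⟩
      · exact Or.inl ⟨hmlt.ne, hm⟩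
      · exact Or.inr ⟨hx, hlt⟩
    · rintro (⟨hx1, hx2⟩ | ⟨hx, hlt⟩)
      · by_cases hxm : x = m
        · subst hxm; exact Or.inr ⟨Or.inl rfl, hmlt⟩
        · exact Or.inl ⟨hx1, hxm, hx2⟩
      · exact Or.inr ⟨Or.inr hx, hlt⟩
  · obtain ⟨hmp, _⟩ := cand_plain (sup_id_mem hc) hm
    obtain ⟨ho, hp⟩ := f_over_case2 hc hm
    ext x
    simp only [cand, hL, ho, hp, Finset.mem_union, Multiset.mem_toFinset,
      Multiset.mem_filter, Finset.mem_erase, Finset.mem_insert]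
    constructor
    · rintro (⟨hx1, (rfl | hx2)⟩ | ⟨hx, hlt⟩)
      · exact Or.inr ⟨hmp, hmlt⟩
      · exact Or.inl ⟨hx1, hx2⟩
      · exact Or.inr ⟨Multiset.mem_of_mem_erase hx, hlt⟩
    · rintro (⟨hx1, hx2⟩ | ⟨hx, hlt⟩)
      · exact Or.inl ⟨hx1, Or.inr hx2⟩
      · by_cases hxm : x = m
        · subst hxm; exact Or.inl ⟨hmlt.ne, Or.inl rfl⟩
        · exact Or.inr ⟨Multiset.mem_erase_of_ne hxm |>.mpr hx, hlt⟩

theorem f_f {π : Overpartition n} (hne : π.overs.Nonempty) (hc : (cand π).Nonempty) :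
    f (f π) = π := by
  have hcf : (cand (f π)).Nonempty := by rw [f_cand hne hc]; exact hc
  have hsup : (cand (f π)).sup id = (cand π).sup id := by rw [f_cand hne hc]
  set m := (cand π).sup id with hmdef
  by_cases hm : m ∈ π.overs
  · obtain ⟨ho, hp⟩ := f_over_case1 hc hm
    have hm' : (cand (f π)).sup id ∉ (f π).overs := by
      rw [hsup, ho]; exact Finset.notMem_erase m π.overs
    obtain ⟨ho2, hp2⟩ := f_over_case2 hcf hm'
    apply op_ext
    · rw [ho2, hsup, ho, Finset.insert_erase hm]
    · rw [hp2, hsup, hp, Multiset.erase_cons_head]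
  · obtain ⟨hmp, _⟩ := cand_plain (sup_id_mem hc) hm
    obtain ⟨ho, hp⟩ := f_over_case2 hc hm
    have hm' : (cand (f π)).sup id ∈ (f π).overs := by
      rw [hsup, ho]; exact Finset.mem_insert_self m π.overs
    obtain ⟨ho2, hp2⟩ := f_over_case1 hcf hm'
    apply op_ext
    · rw [ho2, hsup, ho, Finset.erase_insert hm]
    · rw [hp2, hsup, hp, Multiset.cons_erase hmp]

theorem f_ml {π : Overpartition n} (hne : π.overs.Nonempty) (hc : (cand π).Nonempty) :
    ml (f π) = ml π + 1 ∨ ml π = ml (f π) + 1 := by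
  have hL := f_Lv hne hc
  set m := (cand π).sup id with hmdef
  have hmlt : m < Lv π := cand_lt (sup_id_mem hc)
  by_cases hm : m ∈ π.overs
  · left
    obtain ⟨ho, hp⟩ := f_over_case1 hc hm
    have e1 : ml (f π) = Multiset.card (Multiset.filter (fun x => x < Lv π) (m ::ₘ π.plain)) := by
      rw [ml, hL, hp]
    rw [e1, Multiset.filter_cons_of_pos (p := fun x => x < Lv π) _ hmlt, Multiset.card_cons, ml]
  · right
    obtain ⟨hmp, _⟩ := cand_plain (sup_id_mem hc) hm
    obtain ⟨ho, hp⟩ := f_over_case2 hc hm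
    have e1 : ml (f π) = Multiset.card (Multiset.filter (fun x => x < Lv π) (π.plain.erase m)) := by
      rw [ml, hL, hp]
    have e2 : ml π = Multiset.card (Multiset.filter (fun x => x < Lv π) (m ::ₘ π.plain.erase m)) := by
      rw [ml, Multiset.cons_erase hmp]
    rw [e1, e2, Multiset.filter_cons_of_pos (p := fun x => x < Lv π) _ hmlt, Multiset.card_cons]
end OPaux
namespace OPaux
variable {n : ℕ}

theorem fix_over {π : Overpartition n} (hne : π.overs.Nonempty) (hc : cand π = ∅) :
    π.overs = {Lv π} := by
  have h1 : π.overs.erase (Lv π) = ∅ := (Finset.union_eq_empty.mp hc).1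
  rcases (Finset.erase_eq_empty_iff π.overs (Lv π)).mp h1 with h | h
  · exact absurd h (Finset.nonempty_iff_ne_empty.mp hne)
  · exact h

theorem fix_filter {π : Overpartition n} (hc : cand π = ∅) :
    π.plain.filter (fun x => x < Lv π) = 0 := by
  have h2 := (Finset.union_eq_empty.mp hc).2
  exact Multiset.toFinset_eq_empty.mp h2

theorem fix_ml {π : Overpartition n} (hc : cand π = ∅) : ml π = 0 := by
  rw [ml, fix_filter hc]; rfl

theorem fix_ge {π : Overpartition n} (hc : cand π = ∅) {x : ℕ} (hx : x ∈ π.plain) :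
    Lv π ≤ x := by
  by_contra h
  have : x ∈ π.plain.filter (fun x => x < Lv π) :=
    Multiset.mem_filter.mpr ⟨hx, by omega⟩
  rw [fix_filter hc] at this
  simp at this

noncomputable def mmin (s : Multiset ℕ) : ℕ := sInf {x | x ∈ s}

theorem mmin_mem {s : Multiset ℕ} (h : s ≠ 0) : mmin s ∈ s := by
  have : {x | x ∈ s}.Nonempty := by
    obtain ⟨x, hx⟩ := Multiset.exists_mem_of_ne_zero h
    exact ⟨x, hx⟩
  exact Nat.sInf_mem this

theorem mmin_le {s : Multiset ℕ} {x : ℕ} (hx : x ∈ s) : mmin s ≤ x := Nat.sInf_le hx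

theorem parts_ne_zero (hn : 1 ≤ n) (lam : n.Partition) : lam.parts ≠ 0 := by
  intro h
  have := lam.parts_sum
  rw [h] at this
  simp at this
  omega

noncomputable def toPart (π : Overpartition n) (hne : π.overs.Nonempty) (hc : cand π = ∅) :
    n.Partition where
  parts := Lv π ::ₘ π.plain
  parts_pos := by
    intro i hi
    rcases Multiset.mem_cons.mp hi with rfl | hi
    · exact π.over_pos _ (Lv_mem hne)
    · exact π.plain_pos _ hi
  parts_sum := by
    have hs := π.sum_eq
    rw [fix_over hne hc, Finset.sum_singleton] at hs
    rw [Multiset.sum_cons]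
    omega

noncomputable def fromPart (hn : 1 ≤ n) (lam : n.Partition) : Overpartition n where
  overs := {mmin lam.parts}
  plain := lam.parts.erase (mmin lam.parts)
  over_pos := by
    intro x hx
    rw [Finset.mem_singleton] at hx
    subst hx
    exact lam.parts_pos (mmin_mem (parts_ne_zero hn lam))
  plain_pos := fun x hx => lam.parts_pos (Multiset.mem_of_mem_erase hx)
  sum_eq := by
    have h1 := congrArg Multiset.sum (Multiset.cons_erase (mmin_mem (parts_ne_zero hn lam)))
    rw [Multiset.sum_cons] at h1
    have h2 := lam.parts_sum
    rw [Finset.sum_singleton]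
    omega

theorem fromPart_over (hn : 1 ≤ n) (lam : n.Partition) :
    (fromPart hn lam).overs = {mmin lam.parts} := rfl

theorem fromPart_plain (hn : 1 ≤ n) (lam : n.Partition) :
    (fromPart hn lam).plain = lam.parts.erase (mmin lam.parts) := rfl

theorem fromPart_Lv (hn : 1 ≤ n) (lam : n.Partition) :
    Lv (fromPart hn lam) = mmin lam.parts := by
  rw [Lv, fromPart_over, Finset.sup_singleton]; rfl

theorem fromPart_cand (hn : 1 ≤ n) (lam : n.Partition) : cand (fromPart hn lam) = ∅ := by
  rw [cand, fromPart_Lv, fromPart_over, fromPart_plain, Finset.erase_singleton]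
  rw [Finset.empty_union, Multiset.toFinset_eq_empty]
  apply Multiset.filter_eq_nil.mpr
  intro x hx
  have := mmin_le (Multiset.mem_of_mem_erase hx)
  omega

theorem fromPart_ne (hn : 1 ≤ n) (lam : n.Partition) : (fromPart hn lam).overs.Nonempty := by
  rw [fromPart_over]; exact Finset.singleton_nonempty _

theorem part_ext {p q : n.Partition} (h : p.parts = q.parts) : p = q := by
  cases p; cases q; simp_all

theorem toPart_fromPart (hn : 1 ≤ n) (lam : n.Partition) :
    toPart (fromPart hn lam) (fromPart_ne hn lam) (fromPart_cand hn lam) = lam := by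
  have : (toPart (fromPart hn lam) (fromPart_ne hn lam) (fromPart_cand hn lam)).parts
      = lam.parts := by
    show Lv (fromPart hn lam) ::ₘ (fromPart hn lam).plain = lam.parts
    rw [fromPart_Lv, fromPart_plain, Multiset.cons_erase (mmin_mem (parts_ne_zero hn lam))]
  exact part_ext this

theorem fromPart_toPart (hn : 1 ≤ n) {π : Overpartition n} (hne : π.overs.Nonempty)
    (hc : cand π = ∅) : fromPart hn (toPart π hne hc) = π := by
  have hparts : (toPart π hne hc).parts = Lv π ::ₘ π.plain := rfl
  have hmm : mmin (toPart π hne hc).parts = Lv π := by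
    rw [hparts]
    apply le_antisymm
    · exact mmin_le (Multiset.mem_cons_self _ _)
    · have hm := mmin_mem (s := Lv π ::ₘ π.plain) (by simp)
      rcases Multiset.mem_cons.mp hm with h | h
      · omega
      · exact fix_ge hc h
  apply op_ext
  · rw [fromPart_over, hmm, fix_over hne hc]
  · rw [fromPart_plain, hmm, hparts, Multiset.erase_cons_head]

end OPaux
namespace OPaux
variable {n : ℕ}

theorem card_le_sum_aux (s : Multiset ℕ) (h : ∀ x ∈ s, 0 < x) :
    Multiset.card s ≤ s.sum := by
  induction s using Multiset.induction with
  | empty => simp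
  | cons a s ih =>
    rw [Multiset.card_cons, Multiset.sum_cons]
    have h1 : 0 < a := h a (Multiset.mem_cons_self a s)
    have h2 := ih (fun x hx => h x (Multiset.mem_cons_of_mem hx))
    omega

instance finite_op : Finite (Overpartition n) := by
  classical
  let S : Finset (Finset ℕ × Multiset ℕ) :=
    ((Finset.range (n+1)).powerset) ×ˢ ((n • Multiset.range (n+1)).powerset.toFinset)
  apply Finite.of_injective (fun π : Overpartition n =>
    (⟨(π.overs, π.plain), by
      rw [Finset.mem_product]
      constructor
      · rw [Finset.mem_powerset]
        intro x hx
        rw [Finset.mem_range]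
        have h1 : id x ≤ ∑ y ∈ π.overs, id y :=
          Finset.single_le_sum (fun i _ => Nat.zero_le (id i)) hx
        have h2 := π.sum_eq
        simp only [id] at h1
        omega
      · rw [Multiset.mem_toFinset, Multiset.mem_powerset, Multiset.le_iff_count]
        intro x
        show Multiset.count x π.plain ≤ _
        by_cases hx : x ∈ π.plain
        · have hx1 : 0 < x := π.plain_pos x hx
          have hx2 : x ≤ π.plain.sum := Multiset.single_le_sum (fun y _ => Nat.zero_le y) x hx
          have hx3 : Multiset.count x π.plain ≤ Multiset.card π.plain :=
            Multiset.count_le_card x π.plain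
          have hx4 := card_le_sum_aux π.plain π.plain_pos
          have hx5 := π.sum_eq
          have hx6 : x ∈ Multiset.range (n+1) := by
            rw [Multiset.mem_range]; omega
          rw [Multiset.count_nsmul, Multiset.count_eq_one_of_mem (Multiset.nodup_range _) hx6]
          omega
        · rw [Multiset.count_eq_zero_of_notMem hx]
          exact Nat.zero_le _
      ⟩ : {x // x ∈ S}))
  intro a b hab
  simp only [Subtype.mk.injEq, Prod.mk.injEq] at hab
  exact op_ext hab.1 hab.2

end OPaux
namespace OPaux
variable {n : ℕ}

theorem odd_cand {π : Overpartition n} (h : Odd (ml π)) : (cand π).Nonempty := by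
  rw [Finset.nonempty_iff_ne_empty]
  intro hc
  rw [fix_ml hc] at h
  simp at h

def Ev (n : ℕ) := {π : Overpartition n // π.overs.Nonempty ∧
  Even (Multiset.card (π.plain.filter (fun x => ∃ y ∈ π.overs, x < y)))}

def Od (n : ℕ) := {π : Overpartition n // π.overs.Nonempty ∧
  Odd (Multiset.card (π.plain.filter (fun x => ∃ y ∈ π.overs, x < y)))}

instance : Finite (Ev n) := by unfold Ev; infer_instance
instance : Finite (Od n) := by unfold Od; infer_instance

noncomputable def F (x : Ev n) : Od n ⊕ n.Partition :=
  if hc : (cand x.1).Nonempty then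
    Sum.inl ⟨f x.1, f_over_nonempty x.2.1 hc, by
      rw [card_filter_eq (f_over_nonempty x.2.1 hc)]
      have hev : Even (ml x.1) := by have h := x.2.2; rwa [card_filter_eq x.2.1] at h
      rcases f_ml x.2.1 hc with h | h <;>
        · rw [Nat.odd_iff]; rw [Nat.even_iff] at hev; omega⟩
  else Sum.inr (toPart x.1 x.2.1 (Finset.not_nonempty_iff_eq_empty.mp hc))

noncomputable def G (hn : 1 ≤ n) (y : Od n ⊕ n.Partition) : Ev n :=
  match y with
  | Sum.inl x =>
    have hodd : Odd (ml x.1) := by have h := x.2.2; rwa [card_filter_eq x.2.1] at h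
    have hc : (cand x.1).Nonempty := odd_cand hodd
    ⟨f x.1, f_over_nonempty x.2.1 hc, by
      rw [card_filter_eq (f_over_nonempty x.2.1 hc)]
      rcases f_ml x.2.1 hc with h | h <;>
        · rw [Nat.even_iff]; rw [Nat.odd_iff] at hodd; omega⟩
  | Sum.inr lam =>
    ⟨fromPart hn lam, fromPart_ne hn lam, by
      rw [card_filter_eq (fromPart_ne hn lam), fix_ml (fromPart_cand hn lam)]
      exact Even.zero⟩

theorem GF (hn : 1 ≤ n) (x : Ev n) : G hn (F x) = x := by
  by_cases hc : (cand x.1).Nonempty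
  · rw [F, dif_pos hc]
    apply Subtype.ext
    show f (f x.1) = x.1
    exact f_f x.2.1 hc
  · rw [F, dif_neg hc]
    apply Subtype.ext
    show fromPart hn (toPart x.1 x.2.1 _) = x.1
    exact fromPart_toPart hn x.2.1 _

theorem FG (hn : 1 ≤ n) (y : Od n ⊕ n.Partition) : F (G hn y) = y := by
  match y with
  | Sum.inl x =>
    have hodd : Odd (ml x.1) := by have h := x.2.2; rwa [card_filter_eq x.2.1] at h
    have hc : (cand x.1).Nonempty := odd_cand hodd
    have hc' : (cand (G hn (Sum.inl x)).1).Nonempty := by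
      show (cand (f x.1)).Nonempty
      rwa [f_cand x.2.1 hc]
    rw [F, dif_pos hc']
    congr 1
    apply Subtype.ext
    show f (f x.1) = x.1
    exact f_f x.2.1 hc
  | Sum.inr lam =>
    have hc : ¬ (cand (G hn (Sum.inr lam)).1).Nonempty := by
      show ¬ (cand (fromPart hn lam)).Nonempty
      rw [fromPart_cand hn lam]
      simp
    rw [F, dif_neg hc]
    congr 1
    exact toPart_fromPart hn lam

noncomputable def theEquiv (hn : 1 ≤ n) : Ev n ≃ Od n ⊕ n.Partition where
  toFun := F
  invFun := G hn
  left_inv := GF hn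
  right_inv := FG hn

end OPaux

theorem stmt_3 (n : ℕ) (hn : 1 ≤ n) :
    (Nat.card {π : Overpartition n // π.overs.Nonempty ∧
        Even (Multiset.card (π.plain.filter (fun x => ∃ y ∈ π.overs, x < y)))} : ℤ) -
      Nat.card {π : Overpartition n // π.overs.Nonempty ∧
        Odd (Multiset.card (π.plain.filter (fun x => ∃ y ∈ π.overs, x < y)))} =
    Nat.card (Nat.Partition n) := by
  have h := Nat.card_congr (OPaux.theEquiv hn)
  rw [Nat.card_sum] at h
  show ((Nat.card (OPaux.Ev n) : ℤ)) - (Nat.card (OPaux.Od n)) = Nat.card (Nat.Partition n)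
  rw [h]
  push_cast
  ring
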